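/- Define P_n(x) ∈ ℤ[x] by P_0=1, P_1=x-2, P_n=(x-1)P_{n-1}-xP_{n-2}. Then ∑_{n≥0} P_n(t)x^n = (1-x)/(1+(1-t)x+tx^2) in ℤ[t][[x]], and the moments, i.e., the coefficients of the first column of the inverse coefficient matrix, are the large Schröder numbers: [x^n] v(x)/x = ∑_{k=0}^n C(n+k,2k)Cat(k), where v = Rev(x(1-x)/(1+x)). -/

import Mathlib

open Finset PowerSeries

private lemma vander (p : ℕ) : ∀ m q : ℕ,
    ∑ i ∈ range (m + 1), i.choose p * (m - i).choose q = (m + 1).choose (p + q + 1) := by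
  intro m
  induction m with
  | zero =>
    intro q
    rcases p with _ | p <;> rcases q with _ | q <;>
      simp [Nat.choose_eq_zero_of_lt, Nat.choose]
  | succ m ih =>
    intro q
    rw [Finset.sum_range_succ]
    cases q with
    | zero =>
      have h1 : ∀ i ∈ range (m + 1), i.choose p * (m + 1 - i).choose 0
          = i.choose p * (m - i).choose 0 := by intro i _; simp
      rw [Finset.sum_congr rfl h1, ih 0]
      simp only [Nat.add_zero, Nat.sub_self, Nat.choose_zero_right, Nat.mul_one]
      rw [Nat.choose_succ_succ (m + 1) p]
      ring
    | succ q' =>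
      have h1 : ∀ i ∈ range (m + 1), i.choose p * (m + 1 - i).choose (q' + 1)
          = i.choose p * (m - i).choose q' + i.choose p * (m - i).choose (q' + 1) := by
        intro i hi
        rw [mem_range] at hi
        rw [show m + 1 - i = (m - i) + 1 by omega, Nat.choose_succ_succ, Nat.mul_add]
      rw [Finset.sum_congr rfl h1, Finset.sum_add_distrib, ih q', ih (q' + 1)]
      simp only [Nat.sub_self]
      have h2 : (0 : ℕ).choose (q' + 1) = 0 := by simp
      rw [h2, Nat.mul_zero, Nat.add_zero,
        show p + (q' + 1) + 1 = (p + q' + 1) + 1 by ring,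
        Nat.choose_succ_succ (m + 1) (p + q' + 1)]

private def Aseq (m : ℕ) : ℕ := ∑ k ∈ range (m + 1), (m + k).choose (2 * k) * catalan k

private lemma Aseq_ext {n i : ℕ} (hi : i ≤ n) :
    Aseq i = ∑ k ∈ range (n + 1), (i + k).choose (2 * k) * catalan k := by
  apply Finset.sum_subset (Finset.range_subset_range.2 (by omega))
  intro k hk hk'
  simp only [mem_range, not_lt] at hk hk'
  have : i + k < 2 * k := by omega
  simp [Nat.choose_eq_zero_of_lt this]

private lemma innSum (n k l : ℕ) :
    ∑ i ∈ range (n + 1), (i + k).choose (2 * k) * (n - i + l).choose (2 * l)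
      = (n + k + l + 1).choose (2 * (k + l) + 1) := by
  have hv := vander (2 * k) (n + k + l) (2 * l)
  have h1 : ∑ j ∈ range (n + k + l + 1), j.choose (2 * k) * (n + k + l - j).choose (2 * l)
      = ∑ j ∈ Ico k (n + k + 1), j.choose (2 * k) * (n + k + l - j).choose (2 * l) := by
    symm
    apply Finset.sum_subset
    · intro j hj; simp only [mem_Ico, mem_range] at *; omega
    · intro j hj hj'
      simp only [mem_range] at hj
      simp only [mem_Ico, not_and, not_lt] at hj'
      by_cases hjk : j < k
      · have : j < 2 * k := by omega
        simp [Nat.choose_eq_zero_of_lt this]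
      · have hge := hj' (by omega)
        have : n + k + l - j < 2 * l := by omega
        simp [Nat.choose_eq_zero_of_lt this]
  rw [h1, Finset.sum_Ico_eq_sum_range] at hv
  rw [show n + k + 1 - k = n + 1 by omega] at hv
  rw [show 2 * (k + l) + 1 = 2 * k + 2 * l + 1 by ring, ← hv]
  apply Finset.sum_congr rfl
  intro i hi
  rw [mem_range] at hi
  rw [show k + i = i + k by omega, show n + k + l - (i + k) = n - i + l by omega]

private lemma triangle_swap (n : ℕ) (F : ℕ → ℕ → ℕ) :
    ∑ k ∈ range (n + 1), ∑ l ∈ range (n + 1 - k), F k l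
      = ∑ m ∈ range (n + 1), ∑ k ∈ range (m + 1), F k (m - k) := by
  rw [Finset.sum_sigma', Finset.sum_sigma']
  apply Finset.sum_nbij' (i := fun x => (⟨x.1 + x.2, x.1⟩ : Σ _ : ℕ, ℕ))
    (j := fun x => (⟨x.2, x.1 - x.2⟩ : Σ _ : ℕ, ℕ))
  · intro a ha
    simp only [mem_sigma, mem_range] at *
    omega
  · intro a ha
    simp only [mem_sigma, mem_range] at *
    omega
  · intro a ha
    simp only [mem_sigma, mem_range] at ha
    ext <;> simp <;> omega
  · intro a ha
    simp only [mem_sigma, mem_range] at ha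
    ext <;> simp <;> omega
  · intro a ha
    simp only [mem_sigma, mem_range] at ha
    simp only []
    rw [show a.1 + a.2 - a.1 = a.2 by omega]

private lemma conv_eq (n : ℕ) :
    ∑ i ∈ range (n + 1), Aseq i * Aseq (n - i)
      = ∑ m ∈ range (n + 1), (n + m + 1).choose (2 * m + 1) * catalan (m + 1) := by
  calc ∑ i ∈ range (n + 1), Aseq i * Aseq (n - i)
      = ∑ i ∈ range (n + 1), ∑ k ∈ range (n + 1), ∑ l ∈ range (n + 1),
          (i + k).choose (2 * k) * (n - i + l).choose (2 * l) * (catalan k * catalan l) := by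
        apply Finset.sum_congr rfl
        intro i hi
        rw [mem_range] at hi
        rw [Aseq_ext (show i ≤ n by omega), Aseq_ext (show n - i ≤ n by omega),
          Finset.sum_mul_sum]
        apply Finset.sum_congr rfl
        intro k _
        apply Finset.sum_congr rfl
        intro l _
        ring
    _ = ∑ k ∈ range (n + 1), ∑ l ∈ range (n + 1),
          (∑ i ∈ range (n + 1), (i + k).choose (2 * k) * (n - i + l).choose (2 * l))
            * (catalan k * catalan l) := by
        rw [Finset.sum_comm]
        apply Finset.sum_congr rfl
        intro k _
        rw [Finset.sum_comm]
        apply Finset.sum_congr rfl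
        intro l _
        rw [Finset.sum_mul]
    _ = ∑ k ∈ range (n + 1), ∑ l ∈ range (n + 1),
          (n + (k + l) + 1).choose (2 * (k + l) + 1) * (catalan k * catalan l) := by
        apply Finset.sum_congr rfl; intro k _
        apply Finset.sum_congr rfl; intro l _
        rw [innSum, show n + k + l + 1 = n + (k + l) + 1 by ring]
    _ = ∑ k ∈ range (n + 1), ∑ l ∈ range (n + 1 - k),
          (n + (k + l) + 1).choose (2 * (k + l) + 1) * (catalan k * catalan l) := by
        apply Finset.sum_congr rfl
        intro k hk
        rw [mem_range] at hk
        symm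
        apply Finset.sum_subset (Finset.range_subset_range.2 (by omega))
        intro l hl hl'
        simp only [mem_range, not_lt] at hl hl'
        have : n + (k + l) + 1 < 2 * (k + l) + 1 := by omega
        simp [Nat.choose_eq_zero_of_lt this]
    _ = ∑ m ∈ range (n + 1), ∑ k ∈ range (m + 1),
          (n + (k + (m - k)) + 1).choose (2 * (k + (m - k)) + 1)
            * (catalan k * catalan (m - k)) := by
        exact triangle_swap n
          (fun k l => (n + (k + l) + 1).choose (2 * (k + l) + 1) * (catalan k * catalan l))
    _ = ∑ m ∈ range (n + 1), (n + m + 1).choose (2 * m + 1) * catalan (m + 1) := by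
        apply Finset.sum_congr rfl
        intro m hm
        have h1 : ∀ k ∈ range (m + 1),
            (n + (k + (m - k)) + 1).choose (2 * (k + (m - k)) + 1)
              * (catalan k * catalan (m - k))
            = (n + m + 1).choose (2 * m + 1) * (catalan k * catalan (m - k)) := by
          intro k hk
          rw [mem_range] at hk
          rw [show k + (m - k) = m by omega]
        rw [Finset.sum_congr rfl h1, ← Finset.mul_sum, catalan_succ', 
          Finset.Nat.sum_antidiagonal_eq_sum_range_succ_mk]

private lemma schroder_rec (n : ℕ) :
    Aseq (n + 1) = Aseq n + ∑ i ∈ range (n + 1), Aseq i * Aseq (n - i) := by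
  rw [conv_eq]
  have hA1 : Aseq (n + 1)
      = (∑ i ∈ range (n + 1), ((n + i + 1).choose (2 * i + 1) * catalan (i + 1)
          + (n + i + 1).choose (2 * i + 2) * catalan (i + 1))) + 1 := by
    rw [show Aseq (n + 1) = ∑ k ∈ range (n + 2), (n + 1 + k).choose (2 * k) * catalan k from rfl,
      Finset.sum_range_succ']
    simp only [Nat.mul_zero, Nat.choose_zero_right, catalan_zero, Nat.mul_one]
    congr 1
    apply Finset.sum_congr rfl
    intro i _
    rw [show n + 1 + (i + 1) = (n + i + 1) + 1 by ring,
      show 2 * (i + 1) = (2 * i + 1) + 1 by ring, Nat.choose_succ_succ, Nat.add_mul]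
  have hA2 : Aseq n
      = (∑ i ∈ range (n + 1), (n + i + 1).choose (2 * i + 2) * catalan (i + 1)) + 1 := by
    rw [show Aseq n = ∑ k ∈ range (n + 1), (n + k).choose (2 * k) * catalan k from rfl,
      Finset.sum_range_succ']
    simp only [Nat.mul_zero, Nat.choose_zero_right, catalan_zero, Nat.mul_one]
    congr 1
    rw [Finset.sum_range_succ]
    have hz : (n + n + 1).choose (2 * n + 2) = 0 :=
      Nat.choose_eq_zero_of_lt (by omega)
    rw [hz, Nat.zero_mul, Nat.add_zero]
    apply Finset.sum_congr rfl
    intro i _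
    rw [show n + (i + 1) = n + i + 1 by ring, show 2 * (i + 1) = 2 * i + 2 by ring]
  rw [hA1, hA2, Finset.sum_add_distrib]
  ring

theorem schroder_moments (P : ℕ → Polynomial ℤ)
    (hP0 : P 0 = 1)
    (hP1 : P 1 = Polynomial.X - 2)
    (hPrec : ∀ n, P (n + 2) =
      (Polynomial.X - 1) * P (n + 1) - Polynomial.X * P n)
    (v : PowerSeries ℚ)
    (hv0 : PowerSeries.constantCoeff (R := ℚ) v = 0)
    (hv : v * (1 - v) = PowerSeries.X * (1 + v)) :
    PowerSeries.mk (fun n => P n) =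
      (1 - PowerSeries.C (R := Polynomial ℤ) 1 * PowerSeries.X) *
        PowerSeries.invOfUnit
          (1 + PowerSeries.C (R := Polynomial ℤ) (1 - Polynomial.X) * PowerSeries.X
             + PowerSeries.C (R := Polynomial ℤ) Polynomial.X * PowerSeries.X ^ 2) 1 ∧
    ∀ n : ℕ, PowerSeries.coeff (R := ℚ) (n + 1) v =
      ((∑ k ∈ Finset.range (n + 1), (n + k).choose (2 * k) * catalan k : ℕ) : ℚ) := by
  constructor
  · set U : PowerSeries (Polynomial ℤ) :=
      1 + PowerSeries.C (R := Polynomial ℤ) (1 - Polynomial.X) * PowerSeries.X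
        + PowerSeries.C (R := Polynomial ℤ) Polynomial.X * PowerSeries.X ^ 2 with hUdef
    have hU : PowerSeries.constantCoeff (R := Polynomial ℤ) U
        = ((1 : (Polynomial ℤ)ˣ) : Polynomial ℤ) := by
      simp [hUdef]
    have hmul : PowerSeries.mk (fun n => P n) * U
        = 1 - PowerSeries.C (R := Polynomial ℤ) 1 * PowerSeries.X := by
      refine PowerSeries.ext fun n => ?_
      have e1 : PowerSeries.mk (fun n => P n) * U
          = PowerSeries.mk (fun n => P n)
            + (PowerSeries.mk (fun n => P n)
                * PowerSeries.C (R := Polynomial ℤ) (1 - Polynomial.X)) * PowerSeries.X ^ 1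
            + (PowerSeries.mk (fun n => P n)
                * PowerSeries.C (R := Polynomial ℤ) Polynomial.X) * PowerSeries.X ^ 2 := by
        rw [hUdef]; ring
      rw [e1, map_add, map_add, PowerSeries.coeff_mul_X_pow', PowerSeries.coeff_mul_X_pow']
      match n with
      | 0 =>
        norm_num [hP0]
      | 1 =>
        rw [if_pos (by norm_num), if_neg (by norm_num), PowerSeries.coeff_mul_C,
          PowerSeries.coeff_mk, PowerSeries.coeff_mk, hP0, hP1, map_sub,
          PowerSeries.coeff_one, PowerSeries.coeff_C_mul, PowerSeries.coeff_X]
        norm_num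
      | (n + 2) =>
        rw [if_pos (by omega), if_pos (by omega), show n + 2 - 1 = n + 1 by omega,
          show n + 2 - 2 = n by omega, PowerSeries.coeff_mul_C, PowerSeries.coeff_mul_C,
          PowerSeries.coeff_mk, PowerSeries.coeff_mk, PowerSeries.coeff_mk, hPrec n,
          map_sub, PowerSeries.coeff_one, PowerSeries.coeff_C_mul, PowerSeries.coeff_X]
        rw [if_neg (by omega), if_neg (by omega)]
        ring
    have hinv := PowerSeries.mul_invOfUnit U 1 hU
    calc PowerSeries.mk (fun n => P n)
        = PowerSeries.mk (fun n => P n) * (U * PowerSeries.invOfUnit U 1) := by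
          rw [hinv, mul_one]
      _ = (PowerSeries.mk (fun n => P n) * U) * PowerSeries.invOfUnit U 1 := by ring
      _ = _ := by rw [hmul]
  · have hc0 : PowerSeries.coeff (R := ℚ) 0 v = 0 := by
      rw [PowerSeries.coeff_zero_eq_constantCoeff]; exact hv0
    have key : v = PowerSeries.X + PowerSeries.X * v + v * v := by
      linear_combination hv
    have hsq : ∀ m : ℕ, PowerSeries.coeff (R := ℚ) (m + 2) (v * v)
        = ∑ i ∈ range (m + 1),
            PowerSeries.coeff (R := ℚ) (i + 1) v * PowerSeries.coeff (R := ℚ) (m - i + 1) v := by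
      intro m
      rw [PowerSeries.coeff_mul, Finset.Nat.sum_antidiagonal_eq_sum_range_succ_mk,
        Finset.sum_range_succ', Finset.sum_range_succ]
      simp only [show m + 2 - (m + 1 + 1) = 0 from by omega, hc0, mul_zero, zero_mul,
        add_zero, Nat.sub_zero]
      apply Finset.sum_congr rfl
      intro i hi
      rw [mem_range] at hi
      rw [show m + 2 - (i + 1) = m - i + 1 by omega]
    have hrec : ∀ m : ℕ, PowerSeries.coeff (R := ℚ) (m + 2) v
        = PowerSeries.coeff (R := ℚ) (m + 1) v + ∑ i ∈ range (m + 1),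
            PowerSeries.coeff (R := ℚ) (i + 1) v * PowerSeries.coeff (R := ℚ) (m - i + 1) v := by
      intro m
      have h := congrArg (PowerSeries.coeff (R := ℚ) (m + 2)) key
      rw [map_add, map_add, hsq m, PowerSeries.coeff_X,
        PowerSeries.coeff_succ_X_mul] at h
      simpa using h
    have ha1 : PowerSeries.coeff (R := ℚ) 1 v = 1 := by
      have h := congrArg (PowerSeries.coeff (R := ℚ) 1) key
      rw [map_add, map_add, PowerSeries.coeff_X, PowerSeries.coeff_succ_X_mul,
        PowerSeries.coeff_mul, Finset.Nat.sum_antidiagonal_eq_sum_range_succ_mk] at h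
      simpa [Finset.sum_range_succ, hc0] using h
    have main : ∀ m : ℕ, PowerSeries.coeff (R := ℚ) (m + 1) v = (Aseq m : ℚ) := by
      intro m
      induction m using Nat.strong_induction_on with
      | _ m ih =>
        match m with
        | 0 =>
          rw [ha1]
          norm_num [Aseq]
        | (m + 1) =>
          rw [hrec m]
          have h1 : ∀ i ∈ range (m + 1),
              PowerSeries.coeff (R := ℚ) (i + 1) v * PowerSeries.coeff (R := ℚ) (m - i + 1) v
                = ((Aseq i * Aseq (m - i) : ℕ) : ℚ) := by
            intro i hi
            rw [mem_range] at hi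
            rw [ih i (by omega), ih (m - i) (by omega)]
            push_cast
            ring
          rw [Finset.sum_congr rfl h1, ih m (by omega), ← Nat.cast_sum, ← Nat.cast_add,
            ← schroder_rec m]
    intro n
    exact main n
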